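/- Let μ, α, β, a be real numbers and n ≥ 2 a positive integer. Define the quadratic form g(x₁,…,xₙ) = μx₁² + α·∑_{i=2}^{n} xᵢ² + 2a·∑_{i=2}^{n} x₁xᵢ + 2β·∑_{2≤i<j≤n} xᵢxⱼ. If α ≥ β; μ + α + (n−2)β ≥ 0; μα + (n−2)μβ − (n−1)a² ≥ 0; μ + (n−1)α > 0; and (α − β)·[μα + (n−2)μβ − (n−1)a²] = 0, then g is positive semidefinite, i.e., g(x₁,…,xₙ) ≥ 0 for all real x₁,…,xₙ. -/

import Mathlib

open Finset

/-- The quadratic form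
`g(x₁,…,xₙ) = μx₁² + α·∑_{i=2}^{n} xᵢ² + 2a·∑_{i=2}^{n} x₁xᵢ + 2β·∑_{2≤i<j≤n} xᵢxⱼ`. -/
def quadFormG (n : ℕ) (μ α β a : ℝ) (x : ℕ → ℝ) : ℝ :=
    μ * x 1 ^ 2 + α * ∑ i ∈ Icc 2 n, x i ^ 2
    + 2 * a * ∑ i ∈ Icc 2 n, x 1 * x i
    + 2 * β * ∑ i ∈ Icc 2 n, ∑ j ∈ Icc (i + 1) n, x i * x j

lemma myIccSucc (a b : ℕ) (h : a ≤ b + 1) : Icc a (b + 1) = insert (b + 1) (Icc a b) := by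
  ext k; simp only [Finset.mem_Icc, Finset.mem_insert]; omega

lemma offdiag (n : ℕ) (x : ℕ → ℝ) :
    2 * ∑ i ∈ Icc 2 n, ∑ j ∈ Icc (i + 1) n, x i * x j
      = (∑ i ∈ Icc 2 n, x i) ^ 2 - ∑ i ∈ Icc 2 n, x i ^ 2 := by
  induction n with
  | zero => simp
  | succ m ih =>
    rcases Nat.eq_zero_or_pos m with hm | hm
    · subst hm; simp [show Icc 2 1 = (∅ : Finset ℕ) from rfl]
    have h1 : Icc 2 (m + 1) = insert (m + 1) (Icc 2 m) := myIccSucc 2 m (by omega)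
    have hnot : m + 1 ∉ Icc 2 m := by simp
    rw [h1, Finset.sum_insert hnot, Finset.sum_insert hnot, Finset.sum_insert hnot]
    have hempty : Icc (m + 1 + 1) (m + 1) = (∅ : Finset ℕ) := by
      apply Finset.Icc_eq_empty; omega
    have hinner : ∀ i ∈ Icc 2 m, ∑ j ∈ Icc (i + 1) (m + 1), x i * x j
        = (∑ j ∈ Icc (i + 1) m, x i * x j) + x i * x (m + 1) := by
      intro i hi
      rw [myIccSucc (i + 1) m (by simp [Finset.mem_Icc] at hi; omega),
        Finset.sum_insert (by simp)]
      ring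
    rw [Finset.sum_congr rfl hinner, hempty]
    simp only [Finset.sum_empty, Finset.sum_add_distrib, ← Finset.sum_mul]
    rw [add_sq]
    linarith [ih]

theorem quadFormG_nonneg (n : ℕ) (μ α β a : ℝ)
    (hn : 2 ≤ n)
    (hA1 : α ≥ β)
    (hA2 : μ + α + ((n : ℝ) - 2) * β ≥ 0)
    (hA3 : μ * α + ((n : ℝ) - 2) * μ * β - ((n : ℝ) - 1) * a ^ 2 ≥ 0)
    (hA4 : μ + ((n : ℝ) - 1) * α > 0)
    (hA5 : (α - β) * (μ * α + ((n : ℝ) - 2) * μ * β - ((n : ℝ) - 1) * a ^ 2) = 0) :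
    ∀ x : ℕ → ℝ, quadFormG n μ α β a x ≥ 0 := by
  intro x
  set t := x 1 with ht
  set s := ∑ i ∈ Icc 2 n, x i with hs
  set q := ∑ i ∈ Icc 2 n, x i ^ 2 with hq
  have hn2 : (2 : ℝ) ≤ (n : ℝ) := by exact_mod_cast hn
  have hcard : (#(Icc 2 n) : ℝ) = (n : ℝ) - 1 := by
    rw [Nat.card_Icc]
    have : n + 1 - 2 = n - 1 := by omega
    rw [this]
    push_cast [Nat.cast_sub (by omega : 1 ≤ n)]
    ring
  have hCS : s ^ 2 ≤ ((n : ℝ) - 1) * q := by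
    rw [← hcard]; exact sq_sum_le_card_mul_sum_sq
  have hsum1 : ∑ i ∈ Icc 2 n, t * x i = t * s := by
    rw [hs, Finset.mul_sum]
  have hgeq : quadFormG n μ α β a x
      = μ * t ^ 2 + 2 * a * t * s + β * s ^ 2 + (α - β) * q := by
    rw [quadFormG, hsum1, ← hq]
    have h2 := offdiag n x
    rw [← hs, ← hq] at h2
    linear_combination β * h2
  rw [hgeq]
  clear_value t s q
  clear hgeq hsum1 hcard hs hq ht hA4 hA5 x
  -- derive sign facts
  have hc' : 0 ≤ α + ((n : ℝ) - 2) * β := by nlinarith [sq_nonneg a]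
  have hμ : 0 ≤ μ := by nlinarith [sq_nonneg a]
  have h1 : 0 ≤ (α - β) * (((n : ℝ) - 1) * q - s ^ 2) :=
    mul_nonneg (by linarith) (by linarith)
  rcases eq_or_lt_of_le hμ with hμ0 | hμpos
  · have ha : a = 0 := by
      have : ((n : ℝ) - 1) * a ^ 2 ≤ 0 := by nlinarith
      nlinarith [sq_nonneg a]
    subst ha
    rw [← hμ0]
    nlinarith [sq_nonneg s, mul_nonneg hc' (sq_nonneg s)]
  · have hn1 : (0:ℝ) < (n:ℝ) - 1 := by linarith
    nlinarith [mul_nonneg hn1.le (sq_nonneg (μ * t + a * s)), mul_nonneg hμ h1,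
      mul_nonneg hA3.le (sq_nonneg s), mul_pos hμpos hn1]
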